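/- For s > 0, define the quark matter polarization Π̂^{mat}(s) at zero temperature (for chemical potential exceeding quark mass, ζ > ξ > 0) by Π̂^{mat}(s) = c·[ 4√(ζ(ζ−ξ)) + 2s·log(√ξ/(√ζ + √(ζ−ξ))) + s^{−1/2}(2ξ − s)√(s + 4ξ)·log( (√(ζ(s+4ξ)) − √(s(ζ−ξ)))/(√(ζ(s+4ξ)) + √(s(ζ−ξ)) ) ) ] with c = g²C(r)/(12π²) > 0. Then lim_{s→0⁺} Π̂^{mat}(s) = 4c·(ζ−ξ)^{3/2}/√ζ, which is strictly positive. -/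

import Mathlib

open Filter Topology

lemma log_slope_one : Tendsto (fun x : ℝ => Real.log (1 + x) / x) (𝓝[≠] (0:ℝ)) (𝓝 1) := by
  have h := (Real.hasDerivAt_log one_ne_zero)
  rw [hasDerivAt_iff_tendsto_slope] at h
  have hmap : Tendsto (fun x : ℝ => 1 + x) (𝓝[≠] (0:ℝ)) (𝓝[≠] (1:ℝ)) := by
    rw [tendsto_nhdsWithin_iff]
    constructor
    · have : Tendsto (fun x : ℝ => 1 + x) (𝓝 (0:ℝ)) (𝓝 (1:ℝ)) := by
        exact (continuous_add_left (1:ℝ)).tendsto' 0 1 (by simp)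
      exact this.mono_left nhdsWithin_le_nhds
    · filter_upwards [eventually_mem_nhdsWithin] with x hx
      simp only [Set.mem_compl_iff, Set.mem_singleton_iff] at hx ⊢
      intro h'; exact hx (by linarith)
  have h2 := h.comp hmap
  simp only [inv_one] at h2
  refine h2.congr fun x => ?_
  simp [slope, Function.comp, Real.log_one, div_eq_inv_mul]

lemma diff_log_slope :
    Tendsto (fun y : ℝ => (Real.log (1 - y) - Real.log (1 + y)) / y) (𝓝[>] (0:ℝ)) (𝓝 (-2)) := by
  have hsub : (𝓝[>] (0:ℝ)) ≤ (𝓝[≠] (0:ℝ)) :=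
    nhdsWithin_mono _ (fun x hx => ne_of_gt hx)
  have h1 : Tendsto (fun y : ℝ => Real.log (1 + y) / y) (𝓝[>] (0:ℝ)) (𝓝 1) :=
    log_slope_one.mono_left hsub
  have hneg : Tendsto (fun y : ℝ => -y) (𝓝[>] (0:ℝ)) (𝓝[≠] (0:ℝ)) := by
    rw [tendsto_nhdsWithin_iff]
    constructor
    · simpa using ((continuous_neg.tendsto (0:ℝ)).mono_left nhdsWithin_le_nhds)
    · filter_upwards [eventually_mem_nhdsWithin] with x hx
      simp only [Set.mem_Ioi] at hx
      simp only [Set.mem_compl_iff, Set.mem_singleton_iff, neg_eq_zero]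
      exact ne_of_gt hx
  have h2 : Tendsto (fun y : ℝ => Real.log (1 - y) / y) (𝓝[>] (0:ℝ)) (𝓝 (-1)) := by
    have h3 := log_slope_one.comp hneg
    have h4 : Tendsto (fun y : ℝ => Real.log (1 - y) / (-y)) (𝓝[>] (0:ℝ)) (𝓝 1) := by
      refine h3.congr fun y => ?_
      simp [Function.comp, sub_eq_add_neg]
    have h5 := h4.neg
    simp only [← neg_div, neg_neg] at h5 ⊢
    convert h5 using 2
    ring_nf
  have h6 := h2.sub h1
  simp only [← sub_div] at h6
  convert h6 using 2
  norm_num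

/-- The zero-temperature quark matter polarization `Π̂^{mat}(s)` in the
long-wavelength limit, for chemical potential exceeding quark mass (ζ > ξ > 0). -/
noncomputable def quarkMatterPol (c ζ ξ : ℝ) (s : ℝ) : ℝ :=
  c * (4 * Real.sqrt (ζ * (ζ - ξ))
    + 2 * s * Real.log (Real.sqrt ξ / (Real.sqrt ζ + Real.sqrt (ζ - ξ)))
    + (Real.sqrt s)⁻¹ * (2 * ξ - s) * Real.sqrt (s + 4 * ξ) *
        Real.log ((Real.sqrt (ζ * (s + 4 * ξ)) - Real.sqrt (s * (ζ - ξ))) /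
                  (Real.sqrt (ζ * (s + 4 * ξ)) + Real.sqrt (s * (ζ - ξ)))))

/-- The infrared limit of the quark matter polarization:
`Π̂^{mat}(s) → 4c·(ζ−ξ)^{3/2}/√ζ > 0` as `s → 0⁺`. -/
theorem quarkMatterPol_limit_at_zero (c ζ ξ : ℝ) (hc : 0 < c) (hξ : 0 < ξ) (hζξ : ξ < ζ) :
    Tendsto (quarkMatterPol c ζ ξ) (𝓝[>] (0 : ℝ))
      (𝓝 (4 * c * (ζ - ξ) ^ ((3 : ℝ) / 2) / Real.sqrt ζ)) ∧
    0 < 4 * c * (ζ - ξ) ^ ((3 : ℝ) / 2) / Real.sqrt ζ := by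
  have ha : (0:ℝ) < ζ - ξ := by linarith
  have hζ : (0:ℝ) < ζ := by linarith
  set K : ℝ := Real.log (Real.sqrt ξ / (Real.sqrt ζ + Real.sqrt (ζ - ξ))) with hK
  set v : ℝ → ℝ := fun s => Real.sqrt (s * (ζ - ξ)) / Real.sqrt (ζ * (s + 4 * ξ)) with hv
  set D : ℝ → ℝ := fun y => (Real.log (1 - y) - Real.log (1 + y)) / y with hD
  set G : ℝ → ℝ := fun s => c * (4 * Real.sqrt (ζ * (ζ - ξ)) + 2 * s * K
    + (2 * ξ - s) * Real.sqrt (s + 4 * ξ) *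
      (Real.sqrt (ζ - ξ) / Real.sqrt (ζ * (s + 4 * ξ))) * D (v s)) with hG
  -- pointwise equality on Ioi 0
  have heq : ∀ s ∈ Set.Ioi (0:ℝ), quarkMatterPol c ζ ξ s = G s := by
    intro s hs
    simp only [Set.mem_Ioi] at hs
    have hs4 : (0:ℝ) < s + 4 * ξ := by linarith
    have hR : (0:ℝ) < Real.sqrt (ζ * (s + 4 * ξ)) := Real.sqrt_pos.mpr (by positivity)
    have hr : (0:ℝ) < Real.sqrt (s * (ζ - ξ)) := Real.sqrt_pos.mpr (by positivity)
    have hrR : Real.sqrt (s * (ζ - ξ)) < Real.sqrt (ζ * (s + 4 * ξ)) := by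
      apply Real.sqrt_lt_sqrt (by positivity)
      nlinarith
    have hvs : v s = Real.sqrt (s * (ζ - ξ)) / Real.sqrt (ζ * (s + 4 * ξ)) := rfl
    have hv01 : 0 < v s ∧ v s < 1 := by
      constructor
      · exact div_pos hr hR
      · rw [hvs, div_lt_one hR]; exact hrR
    have hlog : Real.log ((Real.sqrt (ζ * (s + 4 * ξ)) - Real.sqrt (s * (ζ - ξ))) /
                  (Real.sqrt (ζ * (s + 4 * ξ)) + Real.sqrt (s * (ζ - ξ))))
        = Real.log (1 - v s) - Real.log (1 + v s) := by
      have heq' : (Real.sqrt (ζ * (s + 4 * ξ)) - Real.sqrt (s * (ζ - ξ))) /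
                  (Real.sqrt (ζ * (s + 4 * ξ)) + Real.sqrt (s * (ζ - ξ)))
          = (1 - v s) / (1 + v s) := by
        rw [hvs]; field_simp
      rw [heq', Real.log_div (by linarith [hv01.2]) (by linarith [hv01.1])]
    have hrs : Real.sqrt (s * (ζ - ξ)) = Real.sqrt s * Real.sqrt (ζ - ξ) :=
      Real.sqrt_mul hs.le _
    have hss : (0:ℝ) < Real.sqrt s := Real.sqrt_pos.mpr hs
    have haa : (0:ℝ) < Real.sqrt (ζ - ξ) := Real.sqrt_pos.mpr ha
    simp only [quarkMatterPol, hG, hlog]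
    congr 1
    congr 1
    rw [hD]
    simp only
    rw [hvs, hrs]
    field_simp
  -- v tends to 0 within (0, ∞)
  have hveq : Tendsto v (𝓝[>] (0:ℝ)) (𝓝[>] (0:ℝ)) := by
    rw [tendsto_nhdsWithin_iff]
    constructor
    · have hc1 : ContinuousAt v 0 := by
        apply ContinuousAt.div
        · exact (Real.continuous_sqrt.comp (continuous_id.mul continuous_const)).continuousAt
        · exact (Real.continuous_sqrt.comp (continuous_const.mul
            (continuous_id.add continuous_const))).continuousAt
        · have : (0:ℝ) < ζ * (0 + 4 * ξ) := by positivity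
          exact ne_of_gt (Real.sqrt_pos.mpr this)
      have hv0 : v 0 = 0 := by simp [hv]
      have hc2 := hc1.tendsto
      rw [hv0] at hc2
      exact hc2.mono_left nhdsWithin_le_nhds
    · filter_upwards [eventually_mem_nhdsWithin] with s hs
      simp only [Set.mem_Ioi] at hs ⊢
      have hs4 : (0:ℝ) < s + 4 * ξ := by linarith
      exact div_pos (Real.sqrt_pos.mpr (by positivity)) (Real.sqrt_pos.mpr (by positivity))
  -- Tendsto of G
  have ht1 : Tendsto (fun s : ℝ => 2 * s * K) (𝓝[>] (0:ℝ)) (𝓝 0) := by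
    have h : Tendsto (fun s : ℝ => 2 * s * K) (𝓝 (0:ℝ)) (𝓝 (2 * 0 * K)) :=
      Continuous.tendsto (by continuity) 0
    simpa using h.mono_left nhdsWithin_le_nhds
  have ht2 : Tendsto (fun s : ℝ => 2 * ξ - s) (𝓝[>] (0:ℝ)) (𝓝 (2 * ξ)) := by
    have h : Tendsto (fun s : ℝ => 2 * ξ - s) (𝓝 (0:ℝ)) (𝓝 (2 * ξ - 0)) :=
      Continuous.tendsto (by continuity) 0
    simpa using h.mono_left nhdsWithin_le_nhds
  have ht3 : Tendsto (fun s : ℝ => Real.sqrt (s + 4 * ξ)) (𝓝[>] (0:ℝ))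
      (𝓝 (Real.sqrt (0 + 4 * ξ))) :=
    ((Real.continuous_sqrt.comp (continuous_id.add continuous_const)).tendsto
      (0:ℝ)).mono_left nhdsWithin_le_nhds
  have ht4 : Tendsto (fun s : ℝ => Real.sqrt (ζ - ξ) / Real.sqrt (ζ * (s + 4 * ξ)))
      (𝓝[>] (0:ℝ)) (𝓝 (Real.sqrt (ζ - ξ) / Real.sqrt (ζ * (0 + 4 * ξ)))) := by
    have hcd : ContinuousAt (fun s : ℝ => Real.sqrt (ζ - ξ) / Real.sqrt (ζ * (s + 4 * ξ))) 0 := by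
      apply ContinuousAt.div
      · exact continuousAt_const
      · exact (Real.continuous_sqrt.comp (continuous_const.mul
          (continuous_id.add continuous_const))).continuousAt
      · exact ne_of_gt (Real.sqrt_pos.mpr (by positivity))
    exact hcd.tendsto.mono_left nhdsWithin_le_nhds
  have ht5 : Tendsto (fun s : ℝ => D (v s)) (𝓝[>] (0:ℝ)) (𝓝 (-2)) :=
    diff_log_slope.comp hveq
  have hGt : Tendsto G (𝓝[>] (0:ℝ))
      (𝓝 (c * (4 * Real.sqrt (ζ * (ζ - ξ)) + 0
        + 2 * ξ * Real.sqrt (0 + 4 * ξ) *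
          (Real.sqrt (ζ - ξ) / Real.sqrt (ζ * (0 + 4 * ξ))) * (-2)))) := by
    rw [hG]
    exact tendsto_const_nhds.mul
      ((tendsto_const_nhds.add ht1).add (((ht2.mul ht3).mul ht4).mul ht5))
  -- identify the limit value
  have hsq4 : Real.sqrt (4 * ξ) = 2 * Real.sqrt ξ := by
    rw [show (4:ℝ) * ξ = 2 ^ 2 * ξ by norm_num, Real.sqrt_mul (by positivity),
      Real.sqrt_sq (by norm_num : (0:ℝ) ≤ 2)]
  have hζξsq : Real.sqrt (ζ * (ζ - ξ)) = Real.sqrt ζ * Real.sqrt (ζ - ξ) :=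
    Real.sqrt_mul hζ.le _
  have hζ4sq : Real.sqrt (ζ * (0 + 4 * ξ)) = Real.sqrt ζ * (2 * Real.sqrt ξ) := by
    rw [Real.sqrt_mul hζ.le, zero_add, hsq4]
  have hrpow : (ζ - ξ) ^ ((3:ℝ)/2) = (ζ - ξ) * Real.sqrt (ζ - ξ) := by
    rw [show (3:ℝ)/2 = 1 + 1/2 by norm_num, Real.rpow_add ha, Real.rpow_one,
      ← Real.sqrt_eq_rpow]
  have hsζ : (0:ℝ) < Real.sqrt ζ := Real.sqrt_pos.mpr hζ
  have hsξ : (0:ℝ) < Real.sqrt ξ := Real.sqrt_pos.mpr hξ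
  have hsa : (0:ℝ) < Real.sqrt (ζ - ξ) := Real.sqrt_pos.mpr ha
  have hval : c * (4 * Real.sqrt (ζ * (ζ - ξ)) + 0
        + 2 * ξ * Real.sqrt (0 + 4 * ξ) *
          (Real.sqrt (ζ - ξ) / Real.sqrt (ζ * (0 + 4 * ξ))) * (-2))
      = 4 * c * (ζ - ξ) ^ ((3:ℝ)/2) / Real.sqrt ζ := by
    rw [hrpow, hζξsq, hζ4sq, zero_add, hsq4]
    have hmζ : Real.sqrt ζ * Real.sqrt ζ = ζ := Real.mul_self_sqrt hζ.le
    field_simp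
    linear_combination (4 * Real.sqrt (ζ - ξ)) * hmζ
  constructor
  · have hGt2 := hGt
    rw [hval] at hGt2
    refine Tendsto.congr' ?_ hGt2
    filter_upwards [eventually_mem_nhdsWithin] with s hs
    exact (heq s hs).symm
  · apply div_pos
    · positivity
    · exact hsζ
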